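/- Let r : H → H be a choice of coset representatives for G\H, i.e. r is constant on each right coset Gh, r(h) ∈ Gh (equivalently h·r(h)⁻¹ ∈ G) for all h, and r(1_H) = 1_H. For u ∈ Z¹(G,N) define ũ : H → (H → N) by ũ_h(h′) := (h′·r(h′)⁻¹) • u( (r(h′)·h) · r(r(h′)·h)⁻¹ ). Then: (a) for each h ∈ H the map ũ_h is G-covariant, i.e. ũ_h ∈ N_H; (b) ũ is a 1-cocycle in Z¹(H, N_H); (c) ũ_g(1_H) = u(g) for all g ∈ G. -/

import Mathlib

/-- A 1-cocycle of `G` in a (possibly noncommutative) group `N` on which `G`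
acts on the left by group automorphisms: `u (g₁ * g₂) = u g₁ * g₁ • u g₂`. -/
def IsCocycle {G N : Type*} [Group G] [Group N] [MulDistribMulAction G N]
    (u : G → N) : Prop :=
  ∀ g₁ g₂ : G, u (g₁ * g₂) = u g₁ * g₁ • u g₂

/-- Two maps `u v : G → N` are cohomologous if there is `n : N` with
`v g = n⁻¹ * u g * g • n` for all `g`. -/
def Cohomologous {G N : Type*} [Group G] [Group N] [MulDistribMulAction G N]
    (u v : G → N) : Prop :=
  ∃ n : N, ∀ g : G, v g = n⁻¹ * u g * g • n

/-- The induced `H`-group `N_H` of `G`-covariant maps `φ : H → N`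
(those with `φ (g * h) = g • φ h`), as a subgroup of the group of all maps
`H → N` with pointwise multiplication. -/
def NHgroup {H : Type*} [Group H] (G : Subgroup H) (N : Type*) [Group N]
    [MulDistribMulAction G N] : Subgroup (H → N) where
  carrier := {φ | ∀ (g : G) (h : H), φ ((g : H) * h) = g • φ h}
  mul_mem' := by
    intro a b ha hb g h
    simp only [Pi.mul_apply, ha g h, hb g h, smul_mul']
  one_mem' := by
    intro g h
    simp
  inv_mem' := by
    intro a ha g h
    simp only [Pi.inv_apply, ha g h, smul_inv']

/-- The left action of `H` on `N_H`, given by `(h • φ) h' = φ (h' * h)`; it is an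
action by group automorphisms. -/
instance NHaction {H : Type*} [Group H] (G : Subgroup H) (N : Type*) [Group N]
    [MulDistribMulAction G N] : MulDistribMulAction H ↥(NHgroup G N) where
  smul h φ := ⟨fun h' => (φ : H → N) (h' * h), fun g h' => by
    show (φ : H → N) ((g : H) * h' * h) = g • (φ : H → N) (h' * h)
    rw [mul_assoc]; exact φ.2 g (h' * h)⟩
  one_smul φ := by
    ext h'
    show (φ : H → N) (h' * 1) = (φ : H → N) h'
    rw [mul_one]
  mul_smul h₁ h₂ φ := by
    ext h'
    show (φ : H → N) (h' * (h₁ * h₂)) = (φ : H → N) (h' * h₁ * h₂)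
    rw [mul_assoc]
  smul_mul h φ ψ := by
    ext h'
    rfl
  smul_one h := by
    ext h'
    rfl

theorem tilde_is_covariant_cocycle {H : Type*} [Group H] (G : Subgroup H)
    {N : Type*} [Group N] [MulDistribMulAction G N]
    (r : H → H)
    (hr_const : ∀ h h' : H, h' * h⁻¹ ∈ G → r h' = r h)
    (hr_mem : ∀ h : H, h * (r h)⁻¹ ∈ G)
    (hr_one : r 1 = 1)
    (u : G → N) (hu : IsCocycle u)
    (ut : H → H → N)
    (hut : ∀ h h' : H, ut h h' =
      (⟨h' * (r h')⁻¹, hr_mem h'⟩ : G) •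
        u ⟨(r h' * h) * (r (r h' * h))⁻¹, hr_mem (r h' * h)⟩) :
    (∀ h : H, ut h ∈ NHgroup G N) ∧
    ∃ w : H → ↥(NHgroup G N),
      (∀ h : H, (w h : H → N) = ut h) ∧
      IsCocycle w ∧
      ∀ g : G, (w (g : H) : H → N) 1 = u g := by
  have hrG : ∀ (g : G) (h : H), r ((g : H) * h) = r h := fun g h =>
    hr_const h ((g : H) * h) (by simpa using g.2)
  have hcov : ∀ h : H, ut h ∈ NHgroup G N := by
    intro h g h'
    rw [hut, hut]
    have h1 : r ((g : H) * h') = r h' := hrG g h'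
    have e1 : (⟨(g : H) * h' * (r ((g : H) * h'))⁻¹, hr_mem _⟩ : G)
        = g * ⟨h' * (r h')⁻¹, hr_mem h'⟩ := by
      ext; simp [h1, mul_assoc]
    have e2 : (⟨(r ((g : H) * h') * h) * (r (r ((g : H) * h') * h))⁻¹, hr_mem _⟩ : G)
        = ⟨(r h' * h) * (r (r h' * h))⁻¹, hr_mem _⟩ := by
      ext; simp [h1]
    rw [e1, e2, mul_smul]
  refine ⟨hcov, ⟨fun h => ⟨ut h, hcov h⟩, fun h => rfl, ?_, ?_⟩⟩
  · intro h₁ h₂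
    ext h'
    show ut (h₁ * h₂) h' = ut h₁ h' * ut h₂ (h' * h₁)
    rw [hut, hut, hut]
    set a : G := ⟨h' * (r h')⁻¹, hr_mem h'⟩ with ha
    set k : H := r h' * h₁ with hkdef
    set b : G := ⟨k * (r k)⁻¹, hr_mem k⟩ with hb
    have hk : r (h' * h₁) = r k := by
      apply hr_const
      have : (h' * h₁) * k⁻¹ = h' * (r h')⁻¹ := by rw [hkdef]; group
      rw [this]; exact hr_mem h'
    have hkh : r (r k * h₂) = r (k * h₂) := by
      apply hr_const
      have : (r k * h₂) * (k * h₂)⁻¹ = (k * (r k)⁻¹)⁻¹ := by group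
      rw [this]; exact G.inv_mem (hr_mem k)
    set c : G := ⟨r k * h₂ * (r (r k * h₂))⁻¹, hr_mem _⟩ with hc
    have e1 : (⟨h' * h₁ * (r (h' * h₁))⁻¹, hr_mem _⟩ : G) = a * b := by
      ext; simp only [hk, Subgroup.coe_mul, ha, hb, hkdef]; group
    have e2 : (⟨r (h' * h₁) * h₂ * (r (r (h' * h₁) * h₂))⁻¹, hr_mem _⟩ : G) = c := by
      ext; simp [hk]; rfl
    have e3 : (⟨r h' * (h₁ * h₂) * (r (r h' * (h₁ * h₂)))⁻¹, hr_mem _⟩ : G) = b * c := by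
      ext
      have h4 : r h' * (h₁ * h₂) = k * h₂ := by rw [hkdef]; group
      simp only [h4, Subgroup.coe_mul, hb, hc, hkh]
      group
    rw [e1, e2, e3, hu b c, mul_smul, smul_mul']
  · intro g
    show ut (g : H) 1 = u g
    rw [hut]
    have hrg : r (g : H) = 1 := by
      rw [show r (g : H) = r 1 from hr_const 1 (g : H) (by simpa using g.2), hr_one]
    have e1 : (⟨(1 : H) * (r 1)⁻¹, hr_mem _⟩ : G) = 1 := by
      ext; simp [hr_one]
    have e2 : (⟨(r 1 * (g : H)) * (r (r 1 * (g : H)))⁻¹, hr_mem _⟩ : G) = g := by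
      ext; simp [hr_one, hrg]
    rw [e1, e2, one_smul]
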